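/- Let r ≥ 1 and let f₁,…,f_r : ℝ → ℝ be continuous. Fix t ∈ ℝ. Then for every s₀ ∈ ℝ, the function s ↦ I(f₁,…,f_r)(s,t) is differentiable at s₀ with derivative −f₁(s₀) · I(f₂,…,f_r)(s₀,t) (where for r = 1 the factor I()(s₀,t) is 1, so the derivative is −f₁(s₀)). -/

import Mathlib

noncomputable section

set_option maxHeartbeats 1000000

open intervalIntegral

/-- Auxiliary recursion (on the reversed list): `itRev [f_k, …, f₁] s t` is the
time-ordered iterated integral `I(f₁,…,f_k)(s,t)`. -/
noncomputable def itRev : List (ℝ → ℝ) → ℝ → ℝ → ℝ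
  | [], _, _ => 1
  | f :: fs, s, t => ∫ u in s..t, f u * itRev fs s u

/-- The time-ordered iterated integral `I(f₁,…,f_r)(s,t)`, defined recursively by
`I()(s,t) = 1` and `I(f₁,…,f_k)(s,t) = ∫_s^t f_k(u) · I(f₁,…,f_{k−1})(s,u) du`. -/
noncomputable def timeOrderedIntegral (fs : List (ℝ → ℝ)) (s t : ℝ) : ℝ :=
  itRev fs.reverse s t

open MeasureTheory Set

/-- Joint continuity of `itRev`. -/
lemma itRev_continuous : ∀ (gs : List (ℝ → ℝ)), (∀ g ∈ gs, Continuous g) →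
    Continuous (fun p : ℝ × ℝ => itRev gs p.1 p.2)
  | [], _ => by simpa [itRev] using continuous_const
  | f :: fs, h => by
    have hf : Continuous f := h f (by simp)
    have ih : Continuous (fun p : ℝ × ℝ => itRev fs p.1 p.2) :=
      itRev_continuous fs (fun g hg => h g (by simp [hg]))
    have hF : Continuous (Function.uncurry fun (p : ℝ × ℝ) (u : ℝ) =>
        f u * itRev fs p.1 u) :=
      (hf.comp continuous_snd).mul
        (ih.comp ((continuous_fst.comp continuous_fst).prodMk continuous_snd))
    have key : ∀ s u : ℝ, IntervalIntegrable (fun v => f v * itRev fs s v) volume 0 u := by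
      intro s u
      exact (Continuous.mul hf (ih.comp (Continuous.prodMk_right s))).intervalIntegrable 0 u
    have : (fun p : ℝ × ℝ => itRev (f :: fs) p.1 p.2) =
        fun p : ℝ × ℝ => (∫ u in (0:ℝ)..p.2, f u * itRev fs p.1 u) -
          ∫ u in (0:ℝ)..p.1, f u * itRev fs p.1 u := by
      funext p
      rw [intervalIntegral.integral_interval_sub_left (key p.1 p.2) (key p.1 p.1)]
      rfl
    rw [this]
    exact (intervalIntegral.continuous_parametric_intervalIntegral_of_continuous hF
        continuous_snd).sub
      (intervalIntegral.continuous_parametric_intervalIntegral_of_continuous hF continuous_fst)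

/-- Fubini on a triangle, ordered case. -/
lemma fubini_triangle_le (H : ℝ → ℝ → ℝ) (hH : Continuous (Function.uncurry H))
    {s t : ℝ} (hst : s ≤ t) :
    (∫ v in s..t, ∫ u in s..v, H u v) = ∫ u in s..t, ∫ v in u..t, H u v := by
  set G : ℝ → ℝ → ℝ := fun v u => if u ≤ v then H u v else 0 with hG
  have hGint : Integrable (Function.uncurry G)
      ((volume.restrict (Ioc s t)).prod (volume.restrict (Ioc s t))) := by
    have hmeas : MeasurableSet {p : ℝ × ℝ | p.2 ≤ p.1} :=
      measurableSet_le measurable_snd measurable_fst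
    have h1 : Integrable (fun p : ℝ × ℝ => H p.2 p.1)
        ((volume.restrict (Ioc s t)).prod (volume.restrict (Ioc s t))) := by
      rw [Measure.prod_restrict, ← Measure.volume_eq_prod]
      have hcomp : IntegrableOn (fun p : ℝ × ℝ => H p.2 p.1) (Icc s t ×ˢ Icc s t) volume :=
        ((hH.comp continuous_swap).continuousOn).integrableOn_compact
          (isCompact_Icc.prod isCompact_Icc)
      exact hcomp.mono_set (Set.prod_mono Ioc_subset_Icc_self Ioc_subset_Icc_self)
    have : Function.uncurry G =
        Set.indicator {p : ℝ × ℝ | p.2 ≤ p.1} (fun p : ℝ × ℝ => H p.2 p.1) := by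
      funext p
      simp [hG, Function.uncurry, Set.indicator_apply]
    rw [this]
    exact h1.indicator hmeas
  have step1 : (∫ v in s..t, ∫ u in s..v, H u v) =
      ∫ v in Ioc s t, ∫ u in Ioc s t, G v u := by
    rw [intervalIntegral.integral_of_le hst]
    apply setIntegral_congr_fun measurableSet_Ioc
    intro v hv
    show (∫ u in s..v, H u v) = ∫ u in Ioc s t, G v u
    have h1 : (∫ u in Ioc s t, G v u) = ∫ u in Ioc s t ∩ Iic v, H u v := by
      have : (fun u => G v u) = Set.indicator (Iic v) (fun u => H u v) := by
        funext u; simp [hG, Set.indicator_apply]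
      rw [this, setIntegral_indicator measurableSet_Iic]
    rw [h1, Set.Ioc_inter_Iic, min_eq_right hv.2, intervalIntegral.integral_of_le hv.1.le]
  have step2 : (∫ v in Ioc s t, ∫ u in Ioc s t, G v u) =
      ∫ u in Ioc s t, ∫ v in Ioc s t, G v u := integral_integral_swap hGint
  have step3 : (∫ u in Ioc s t, ∫ v in Ioc s t, G v u) =
      ∫ u in Ioc s t, ∫ v in u..t, H u v := by
    apply setIntegral_congr_fun measurableSet_Ioc
    intro u hu
    show (∫ v in Ioc s t, G v u) = ∫ v in u..t, H u v
    have h1 : (∫ v in Ioc s t, G v u) = ∫ v in Ioc s t ∩ Ici u, H u v := by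
      have : (fun v => G v u) = Set.indicator (Ici u) (fun v => H u v) := by
        funext v; simp [hG, Set.indicator_apply]
      rw [this, setIntegral_indicator measurableSet_Ici]
    have h2 : Ioc s t ∩ Ici u = Icc u t := by
      ext x
      simp only [Set.mem_inter_iff, Set.mem_Ioc, Set.mem_Ici, Set.mem_Icc]
      constructor
      · rintro ⟨⟨_, h2⟩, h3⟩; exact ⟨h3, h2⟩
      · rintro ⟨h1, h2⟩; exact ⟨⟨hu.1.trans_le h1, h2⟩, h1⟩
    rw [h1, h2, MeasureTheory.integral_Icc_eq_integral_Ioc,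
      intervalIntegral.integral_of_le hu.2]
  rw [step1, step2, step3, intervalIntegral.integral_of_le hst]

/-- Fubini on a triangle, general endpoints. -/
lemma fubini_triangle (H : ℝ → ℝ → ℝ) (hH : Continuous (Function.uncurry H)) (s t : ℝ) :
    (∫ v in s..t, ∫ u in s..v, H u v) = ∫ u in s..t, ∫ v in u..t, H u v := by
  rcases le_total s t with hst | hts
  · exact fubini_triangle_le H hH hst
  · have h := fubini_triangle_le (fun u v => H v u)
      (hH.comp continuous_swap) hts
    have inner1 : ∀ v : ℝ, (∫ u in s..v, H u v) = -∫ u in v..s, H u v :=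
      fun v => intervalIntegral.integral_symm _ _
    have inner2 : ∀ u : ℝ, (∫ v in u..t, H u v) = -∫ v in t..u, H u v :=
      fun u => intervalIntegral.integral_symm _ _
    have l1 : (∫ v in s..t, ∫ u in s..v, H u v) =
        ∫ v in t..s, ∫ u in v..s, H u v := by
      calc (∫ v in s..t, ∫ u in s..v, H u v)
          = ∫ v in s..t, -∫ u in v..s, H u v := by simp only [inner1]
        _ = -∫ v in s..t, ∫ u in v..s, H u v := intervalIntegral.integral_neg
        _ = ∫ v in t..s, ∫ u in v..s, H u v := by
            rw [intervalIntegral.integral_symm t s, neg_neg]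
    have l2 : (∫ u in s..t, ∫ v in u..t, H u v) =
        ∫ u in t..s, ∫ v in t..u, H u v := by
      calc (∫ u in s..t, ∫ v in u..t, H u v)
          = ∫ u in s..t, -∫ v in t..u, H u v := by simp only [inner2]
        _ = -∫ u in s..t, ∫ v in t..u, H u v := intervalIntegral.integral_neg
        _ = ∫ u in t..s, ∫ v in t..u, H u v := by
            rw [intervalIntegral.integral_symm t s, neg_neg]
    rw [l1, l2]
    exact h.symm

/-- The "front" recursion for `itRev`. -/
lemma itRev_append_singleton (f : ℝ → ℝ) (hf : Continuous f) :
    ∀ (gs : List (ℝ → ℝ)), (∀ g ∈ gs, Continuous g) → ∀ s t : ℝ,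
      itRev (gs ++ [f]) s t = ∫ u in s..t, f u * itRev gs u t
  | [], _, s, t => by simp [itRev]
  | g :: gs, h, s, t => by
    have hg : Continuous g := h g (by simp)
    have hgs : ∀ g' ∈ gs, Continuous g' := fun g' hg' => h g' (by simp [hg'])
    have ih := itRev_append_singleton f hf gs hgs
    have hcont := itRev_continuous gs hgs
    have hH : Continuous (Function.uncurry fun u v => g v * (f u * itRev gs u v)) := by
      apply Continuous.mul
      · exact hg.comp continuous_snd
      · exact (hf.comp continuous_fst).mul hcont
    calc itRev ((g :: gs) ++ [f]) s t
        = ∫ v in s..t, g v * itRev (gs ++ [f]) s v := rfl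
      _ = ∫ v in s..t, g v * ∫ u in s..v, f u * itRev gs u v := by
          simp only [ih]
      _ = ∫ v in s..t, ∫ u in s..v, g v * (f u * itRev gs u v) := by
          simp only [intervalIntegral.integral_const_mul]
      _ = ∫ u in s..t, ∫ v in u..t, g v * (f u * itRev gs u v) :=
          fubini_triangle (fun u v => g v * (f u * itRev gs u v)) hH s t
      _ = ∫ u in s..t, f u * ∫ v in u..t, g v * itRev gs u v := by
          simp only [← intervalIntegral.integral_const_mul]
          congr 1; funext u; congr 1; funext v; ring
      _ = ∫ u in s..t, f u * itRev (g :: gs) u t := rfl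

/-- For `r ≥ 1` continuous functions `f₁,…,f_r` (here `f :: fs`) and fixed
`t`, the function `s ↦ I(f₁,…,f_r)(s,t)` is differentiable at every `s₀` with derivative
`−f₁(s₀) · I(f₂,…,f_r)(s₀,t)`. -/
theorem statement10 (f : ℝ → ℝ) (fs : List (ℝ → ℝ))
    (hf : Continuous f) (hfs : ∀ g ∈ fs, Continuous g) (t s₀ : ℝ) :
    HasDerivAt (fun s => timeOrderedIntegral (f :: fs) s t)
      (-(f s₀) * timeOrderedIntegral fs s₀ t) s₀ := by
  have hrev : ∀ g ∈ fs.reverse, Continuous g := fun g hg => hfs g (List.mem_reverse.mp hg)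
  have hcont : Continuous (fun p : ℝ × ℝ => itRev fs.reverse p.1 p.2) :=
    itRev_continuous fs.reverse hrev
  set G : ℝ → ℝ := fun u => f u * timeOrderedIntegral fs u t with hGdef
  have hG : Continuous G := by
    apply hf.mul
    exact hcont.comp (Continuous.prodMk_left t)
  have hfun : (fun s => timeOrderedIntegral (f :: fs) s t) = fun s => ∫ u in s..t, G u := by
    funext s
    have : (f :: fs).reverse = fs.reverse ++ [f] := by simp
    rw [timeOrderedIntegral, this, itRev_append_singleton f hf fs.reverse hrev s t]
    rfl
  rw [hfun]
  have := intervalIntegral.integral_hasDerivAt_left (hG.intervalIntegrable s₀ t)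
    hG.stronglyMeasurable.stronglyMeasurableAtFilter hG.continuousAt
  exact this.congr_deriv (by simp [hGdef])
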